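/- For every positive integer n, the sum over k from 1 to n of q^{4(n-k)} · (1-q^k)^2/(1-q)^2 · (1 + q^2 - 2q^{k+1})/(1-q^2) equals the square of the q-binomial coefficient [n+1 choose 2]_q. -/

import Mathlib

/-- The field of rational functions in q over ℚ. -/
noncomputable def q : RatFunc ℚ := RatFunc.X

lemma q_pow_ne_one (k : ℕ) (hk : 0 < k) : (1 : RatFunc ℚ) - q ^ k ≠ 0 := by
  have hX : (Polynomial.X : Polynomial ℚ) ^ k ≠ 1 := by
    intro h
    have := congrArg Polynomial.natDegree h
    simp [Polynomial.natDegree_X_pow] at this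
    omega
  have hne : q ^ k ≠ 1 := by
    intro h
    apply hX
    apply IsFractionRing.injective (Polynomial ℚ) (RatFunc ℚ)
    simpa [q, map_pow, RatFunc.algebraMap_X] using h
  exact sub_ne_zero.mpr (Ne.symm hne)

theorem zhao_feng_q_analogue (n : ℕ) (hn : 0 < n) :
    (∑ k ∈ Finset.Icc 1 n,
        q ^ (4 * (n - k)) * ((1 - q ^ k) ^ 2 / (1 - q) ^ 2) *
          ((1 + q ^ 2 - 2 * q ^ (k + 1)) / (1 - q ^ 2)))
      = ((1 - q ^ (n + 1)) * (1 - q ^ n) / ((1 - q) * (1 - q ^ 2))) ^ 2 := by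
  have h1 : (1 : RatFunc ℚ) - q ≠ 0 := by simpa using q_pow_ne_one 1 one_pos
  have h2 : (1 : RatFunc ℚ) - q ^ 2 ≠ 0 := q_pow_ne_one 2 two_pos
  induction n with
  | zero => omega
  | succ n ih =>
    rcases Nat.eq_zero_or_pos n with hn0 | hn0
    · subst hn0
      simp only [Finset.Icc_self, Finset.sum_singleton]
      field_simp
      ring
    · rw [Finset.sum_Icc_succ_top (by omega : 1 ≤ n + 1)]
      have hshift : ∀ k ∈ Finset.Icc 1 n,
          q ^ (4 * (n + 1 - k)) * ((1 - q ^ k) ^ 2 / (1 - q) ^ 2) *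
            ((1 + q ^ 2 - 2 * q ^ (k + 1)) / (1 - q ^ 2))
          = q ^ 4 * (q ^ (4 * (n - k)) * ((1 - q ^ k) ^ 2 / (1 - q) ^ 2) *
            ((1 + q ^ 2 - 2 * q ^ (k + 1)) / (1 - q ^ 2))) := by
        intro k hk
        simp only [Finset.mem_Icc] at hk
        have : 4 * (n + 1 - k) = 4 + 4 * (n - k) := by omega
        rw [this, pow_add]
        ring
      rw [Finset.sum_congr rfl hshift, ← Finset.mul_sum, ih hn0]
      have hn1 : (1 : RatFunc ℚ) - q ^ n ≠ 0 := q_pow_ne_one n hn0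
      have hn2 : (1 : RatFunc ℚ) - q ^ (n + 1) ≠ 0 := q_pow_ne_one (n + 1) (by omega)
      simp only [Nat.sub_self, mul_zero, pow_zero]
      field_simp
      ring_nf
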